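/- Let R ⊆ ℤ be of the form R = (R⁰ ∪ A) \ B where A, B ⊆ ℤ are finite and disjoint with B ⊆ R⁰ and A ∩ R⁰ = ∅, and R⁰ is a finite union of cosets cᵢ + dℤ (d ≥ 1). Suppose every map x ↦ λx that preserves R (λ ∈ ℤ, λ ≠ 0, λR ⊆ R) also reflects it (λa ∈ R implies a ∈ R). If A = ∅ and 0 ∉ B, then B = ∅. Equivalently: if A = ∅ and B ≠ ∅, then B = {0}. -/
import Mathlib

theorem B_empty_of_A_empty (R R0 : Set ℤ) (A B : Finset ℤ) (cs : Finset ℤ) (d : ℤ)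
    (hd : 1 ≤ d)
    (hR0 : R0 = ⋃ c ∈ cs, {x : ℤ | ∃ k : ℤ, x = c + d * k})
    (hdisj : Disjoint A B) (hB : (B : Set ℤ) ⊆ R0) (hA : (A : Set ℤ) ∩ R0 = ∅)
    (hR : R = (R0 ∪ (A : Set ℤ)) \ (B : Set ℤ))
    (hcore : ∀ lam : ℤ, lam ≠ 0 → (∀ x ∈ R, lam * x ∈ R) →
      (∀ a : ℤ, lam * a ∈ R → a ∈ R)) :
    (A = ∅ ∧ (0 : ℤ) ∉ B → B = ∅) ∧ (A = ∅ ∧ B ≠ ∅ → B = {0}) := by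
  have key : A = ∅ → ∀ b ∈ B, b = (0 : ℤ) := by
    intro hAe b hbB
    by_contra hb0
    -- set up
    subst hAe
    have hR' : R = R0 \ (B : Set ℤ) := by
      rw [hR]; simp
    set M : ℕ := B.sup Int.natAbs with hM
    obtain ⟨m, hm⟩ : ∃ m : ℕ, (M : ℤ) < (d + 1) ^ m :=
      pow_unbounded_of_one_lt (M : ℤ) (by linarith)
    set lam : ℤ := (d + 1) ^ m with hlam
    have hlampos : 0 < lam := pow_pos (by linarith) m
    have hdvd : d ∣ lam - 1 := by
      have := sub_dvd_pow_sub_pow (d + 1) 1 m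
      simpa using this
    obtain ⟨e, he⟩ := hdvd
    -- lam preserves R0
    have hR0pres : ∀ x ∈ R0, lam * x ∈ R0 := by
      intro x hx
      rw [hR0] at hx ⊢
      simp only [Set.mem_iUnion, Set.mem_setOf_eq] at hx ⊢
      obtain ⟨c, hc, k, hk⟩ := hx
      exact ⟨c, hc, e * x + k, by linear_combination x * he + hk⟩
    -- bound: lam * x ∉ B for x ≠ 0
    have hnotB : ∀ x : ℤ, x ≠ 0 → lam * x ∉ (B : Set ℤ) := by
      intro x hx hmem
      have h1 : (lam * x).natAbs ≤ M := Finset.le_sup (by exact_mod_cast hmem)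
      have h2 : (M : ℤ) < |lam * x| := by
        rw [abs_mul, abs_of_pos hlampos]
        calc (M : ℤ) < lam := hm
        _ = lam * 1 := by ring
        _ ≤ lam * |x| := by
            have : (1 : ℤ) ≤ |x| := Int.one_le_abs (by simpa using hx)
            exact mul_le_mul_of_nonneg_left this hlampos.le
      rw [Int.abs_eq_natAbs] at h2
      omega
    have hpres : ∀ x ∈ R, lam * x ∈ R := by
      intro x hx
      rcases eq_or_ne x 0 with rfl | hx0
      · simpa using hx
      · rw [hR'] at hx ⊢
        exact ⟨hR0pres x hx.1, hnotB x hx0⟩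
    have hbR : b ∈ R := by
      apply hcore lam hlampos.ne' hpres
      rw [hR']
      exact ⟨hR0pres b (hB hbB), hnotB b hb0⟩
    rw [hR'] at hbR
    exact hbR.2 hbB
  constructor
  · rintro ⟨hAe, h0⟩
    ext b
    simp only [Finset.notMem_empty, iff_false]
    intro hb
    exact h0 (key hAe b hb ▸ hb)
  · rintro ⟨hAe, hBne⟩
    obtain ⟨b, hb⟩ := Finset.nonempty_iff_ne_empty.mpr hBne
    have hsub : B ⊆ {0} := fun x hx => by simp [key hAe x hx]
    have := key hAe b hb
    subst this
    exact Finset.Subset.antisymm hsub (Finset.singleton_subset_iff.mpr hb)
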